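/- Let g : Ω → ℝ on a bounded domain Ω ⊂ ℝ³ of diameter R, x₀ ∈ Ω, 0 < 3h < R, and suppose |g(x)| ≤ A h^{-2} whenever |x-x₀| ≤ 3h and |g(x)| ≤ A (|x-x₀| - h)^{-2} whenever |x-x₀| > 3h. Let σ(x) = √(|x-x₀|² + K²h²) with K ≥ 1. Then ‖σ^{1/2} g‖_{L²(Ω)} ≤ C A |ln h|^{1/2} for a constant C depending only on K and R (assuming h < 1/2). -/

import Mathlib

open Real MeasureTheory

private lemma stmt6_radial_int (a b : ℝ) (ha : 0 < a) (hab : a ≤ b) :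
    ∫ (x : EuclideanSpace ℝ (Fin 3)), Set.indicator (Set.Ioc a b) (fun y => (y^3)⁻¹) ‖x‖
      = 3 * (volume (Metric.ball (0 : EuclideanSpace ℝ (Fin 3)) 1)).toReal
          * (Real.log b - Real.log a) := by
  rw [MeasureTheory.integral_fun_norm_addHaar (volume : Measure (EuclideanSpace ℝ (Fin 3)))
      (fun y => Set.indicator (Set.Ioc a b) (fun y => (y^3)⁻¹) y)]
  have hdim : Module.finrank ℝ (EuclideanSpace ℝ (Fin 3)) = 3 := by
    simp [finrank_euclideanSpace]
  rw [hdim]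
  have hfun : (fun y : ℝ => y ^ (3-1) • Set.indicator (Set.Ioc a b) (fun y => (y^3)⁻¹) y)
      = fun y => Set.indicator (Set.Ioc a b) (fun y => y⁻¹) y := by
    funext y
    by_cases hy : y ∈ Set.Ioc a b
    · have hy0 : y ≠ 0 := by have := ha.trans hy.1; positivity
      simp only [Set.indicator_of_mem hy, smul_eq_mul]
      field_simp
    · simp [Set.indicator_of_notMem hy]
  have hres : (volume.restrict (Set.Ioi (0:ℝ))).restrict (Set.Ioc a b)
      = volume.restrict (Set.Ioc a b) := by
    rw [Measure.restrict_restrict measurableSet_Ioc]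
    congr 1
    exact Set.inter_eq_self_of_subset_left (fun y hy => ha.trans hy.1)
  rw [hfun, MeasureTheory.integral_indicator measurableSet_Ioc, hres,
    ← intervalIntegral.integral_of_le hab, integral_inv_of_pos ha (ha.trans_le hab),
    Real.log_div (ha.trans_le hab).ne' ha.ne']
  simp only [smul_eq_mul, nsmul_eq_mul]
  push_cast
  simp only [Measure.real]
  ring

private lemma stmt6_radial_integrable (a b : ℝ) (ha : 0 < a) :
    Integrable (fun x : EuclideanSpace ℝ (Fin 3) =>
      Set.indicator (Set.Ioc a b) (fun y => (y^3)⁻¹) ‖x‖) := by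
  have hrw : (fun x : EuclideanSpace ℝ (Fin 3) =>
      Set.indicator (Set.Ioc a b) (fun y => (y^3)⁻¹) ‖x‖)
      = Set.indicator ((fun x : EuclideanSpace ℝ (Fin 3) => ‖x‖) ⁻¹' Set.Ioc a b)
          (fun x => (‖x‖^3)⁻¹) := by
    funext x
    by_cases hx : ‖x‖ ∈ Set.Ioc a b
    · simp [Set.indicator_of_mem hx, Set.indicator_of_mem, hx, Set.mem_preimage]
    · simp [Set.indicator_of_notMem hx, Set.indicator_of_notMem, hx, Set.mem_preimage]
  have hmeas : MeasurableSet ((fun x : EuclideanSpace ℝ (Fin 3) => ‖x‖) ⁻¹' Set.Ioc a b) :=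
    measurableSet_Ioc.preimage (continuous_norm.measurable)
  rw [hrw, integrable_indicator_iff hmeas]
  refine Measure.integrableOn_of_bounded (M := (a^3)⁻¹) ?_ ?_ ?_
  · apply ne_of_lt
    calc volume ((fun x : EuclideanSpace ℝ (Fin 3) => ‖x‖) ⁻¹' Set.Ioc a b)
        ≤ volume (Metric.closedBall (0 : EuclideanSpace ℝ (Fin 3)) b) := by
          apply measure_mono
          intro x hx
          simp only [Set.mem_preimage, Set.mem_Ioc] at hx
          simpa [Metric.mem_closedBall, dist_zero_right] using hx.2
      _ < ⊤ := measure_closedBall_lt_top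
  · exact ((continuous_norm.pow 3).measurable.inv).aestronglyMeasurable
  · apply ae_restrict_of_forall_mem hmeas
    intro x hx
    simp only [Set.mem_preimage, Set.mem_Ioc] at hx
    rw [Real.norm_eq_abs, abs_of_nonneg (by positivity)]
    apply inv_anti₀ (by positivity)
    exact pow_le_pow_left₀ ha.le hx.1.le 3

set_option maxHeartbeats 1000000 in
theorem stmt6 (K R : ℝ) (hK : 1 ≤ K) (hR : 0 < R) :
    ∃ C > 0, ∀ (Ω : Set (EuclideanSpace ℝ (Fin 3))) (x₀ : EuclideanSpace ℝ (Fin 3))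
      (h A : ℝ) (g : EuclideanSpace ℝ (Fin 3) → ℝ),
      Bornology.IsBounded Ω → Metric.diam Ω ≤ R → x₀ ∈ Ω →
      0 < h → h < 1 / 2 → 3 * h < R → 0 ≤ A →
      (∀ x ∈ Ω, ‖x - x₀‖ ≤ 3 * h → |g x| ≤ A * h ^ (-(2 : ℝ))) →
      (∀ x ∈ Ω, 3 * h < ‖x - x₀‖ → |g x| ≤ A * (‖x - x₀‖ - h) ^ (-(2 : ℝ))) →
      Real.sqrt (∫ x in Ω, Real.sqrt (‖x - x₀‖ ^ 2 + K ^ 2 * h ^ 2) * (g x) ^ 2) ≤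
        C * A * Real.sqrt |Real.log h| := by
  have h3K : (0:ℝ) < 3 + K := by linarith
  have h1K : (0:ℝ) < 1 + K := by linarith
  set v₁ : ℝ := (volume (Metric.ball (0 : EuclideanSpace ℝ (Fin 3)) 1)).toReal with hv₁
  have hv₁pos : 0 < v₁ :=
    ENNReal.toReal_pos (Metric.measure_ball_pos volume 0 one_pos).ne' measure_ball_lt_top.ne
  have hlog2 : (0:ℝ) < Real.log 2 := Real.log_pos (by norm_num)
  set C₀ : ℝ := (27*(3+K)*v₁ + (1+K)*(3/2)^4*(3*v₁)*(|Real.log R| + 1)) * (1/Real.log 2 + 1)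
    with hC₀
  have hC₀pos : 0 < C₀ := by positivity
  refine ⟨Real.sqrt C₀, Real.sqrt_pos.2 hC₀pos, ?_⟩
  intro Ω x₀ h A g hΩb hdiam hx₀ h0 hh2 h3R hA hg1 hg2
  have hlogh : Real.log 2 ≤ |Real.log h| := by
    have h1 : Real.log h < 0 := Real.log_neg h0 (by linarith)
    have h2 : Real.log h < Real.log (1/2) := Real.log_lt_log h0 hh2
    have h3 : Real.log (1/2) = -Real.log 2 := by rw [one_div, Real.log_inv]
    rw [abs_of_neg h1]
    linarith
  have habs : (0:ℝ) ≤ |Real.log h| := abs_nonneg _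
  set F : EuclideanSpace ℝ (Fin 3) → ℝ :=
    fun x => Real.sqrt (‖x - x₀‖ ^ 2 + K ^ 2 * h ^ 2) * (g x) ^ 2 with hFdef
  set B : EuclideanSpace ℝ (Fin 3) → ℝ :=
    fun x => ((3+K)*A^2/h^3) * Set.indicator (Metric.closedBall x₀ (3*h)) (fun _ => (1:ℝ)) x
      + ((1+K)*(3/2)^4*A^2) * Set.indicator (Set.Ioc (3*h) R) (fun y => (y^3)⁻¹) ‖x - x₀‖
    with hBdef
  have hb1 : (0:ℝ) ≤ (3+K)*A^2/h^3 := by positivity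
  have hb2 : (0:ℝ) ≤ (1+K)*(3/2:ℝ)^4*A^2 := by positivity
  have hind1nn : ∀ x : EuclideanSpace ℝ (Fin 3),
      0 ≤ Set.indicator (Metric.closedBall x₀ (3*h)) (fun _ => (1:ℝ)) x :=
    fun x => Set.indicator_nonneg (fun _ _ => zero_le_one) x
  have hind2nn : ∀ x : EuclideanSpace ℝ (Fin 3),
      0 ≤ Set.indicator (Set.Ioc (3*h) R) (fun y => (y^3)⁻¹) ‖x - x₀‖ := by
    intro x
    apply Set.indicator_nonneg
    intro y hy
    have hy0 : 0 < y := lt_trans (by positivity) hy.1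
    positivity
  have hBnn : ∀ x, 0 ≤ B x := fun x =>
    add_nonneg (mul_nonneg hb1 (hind1nn x)) (mul_nonneg hb2 (hind2nn x))
  have hFnn : ∀ x, 0 ≤ F x := fun x => mul_nonneg (Real.sqrt_nonneg _) (sq_nonneg _)
  have hpow2 : ∀ t : ℝ, 0 < t → t ^ (-(2:ℝ)) = (t^2)⁻¹ := by
    intro t ht
    rw [Real.rpow_neg ht.le, show ((2:ℝ)) = ((2:ℕ):ℝ) by norm_num, Real.rpow_natCast]
  -- pointwise bound on Ω
  have hFB : ∀ x ∈ Ω, F x ≤ B x := by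
    intro x hx
    have hr0 : (0:ℝ) ≤ ‖x - x₀‖ := norm_nonneg _
    have hrR : ‖x - x₀‖ ≤ R := by
      rw [← dist_eq_norm]
      exact (Metric.dist_le_diam_of_mem hΩb hx hx₀).trans hdiam
    rcases le_or_gt ‖x - x₀‖ (3*h) with hcase | hcase
    · -- ball case
      have hg : |g x| ≤ A * (h^2)⁻¹ := by
        have := hg1 x hx hcase
        rwa [hpow2 h h0] at this
      have hsq : (g x)^2 ≤ (A * (h^2)⁻¹)^2 := by
        rw [← sq_abs]
        exact pow_le_pow_left₀ (abs_nonneg _) hg 2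
      have hsqrt : Real.sqrt (‖x - x₀‖^2 + K^2*h^2) ≤ (3+K)*h := by
        rw [show (3+K)*h = Real.sqrt (((3+K)*h)^2) from (Real.sqrt_sq (by positivity)).symm]
        apply Real.sqrt_le_sqrt
        nlinarith [hcase, hr0, h0, hK]
      have h1 : F x ≤ ((3+K)*h) * (A * (h^2)⁻¹)^2 :=
        mul_le_mul hsqrt hsq (sq_nonneg _) (by positivity)
      have h2 : ((3+K)*h) * (A * (h^2)⁻¹)^2 = (3+K)*A^2/h^3 := by
        field_simp
      have hmem : x ∈ Metric.closedBall x₀ (3*h) := by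
        rw [Metric.mem_closedBall, dist_eq_norm]; exact hcase
      have h3 : F x ≤ ((3+K)*A^2/h^3) *
          Set.indicator (Metric.closedBall x₀ (3*h)) (fun _ => (1:ℝ)) x := by
        rw [Set.indicator_of_mem hmem]
        rw [← h2] at *
        calc F x ≤ ((3+K)*h) * (A * (h^2)⁻¹)^2 := h1
          _ = ((3+K)*h) * (A * (h^2)⁻¹)^2 * 1 := by ring
      exact h3.trans (le_add_of_nonneg_right (mul_nonneg hb2 (hind2nn x)))
    · -- annulus case
      have hrpos : 0 < ‖x - x₀‖ := lt_trans (by positivity) hcase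
      have hhr : h < ‖x - x₀‖ := by linarith
      have hg : |g x| ≤ A * ((‖x - x₀‖ - h)^2)⁻¹ := by
        have := hg2 x hx hcase
        rwa [hpow2 _ (by linarith)] at this
      have hsq : (g x)^2 ≤ A^2 * ((‖x - x₀‖ - h)^4)⁻¹ := by
        rw [← sq_abs]
        calc |g x|^2 ≤ (A * ((‖x - x₀‖ - h)^2)⁻¹)^2 :=
              pow_le_pow_left₀ (abs_nonneg _) hg 2
          _ = A^2 * ((‖x - x₀‖ - h)^4)⁻¹ := by
              rw [mul_pow, ← inv_pow, ← pow_mul, ← inv_pow]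
      have hsqrt : Real.sqrt (‖x - x₀‖^2 + K^2*h^2) ≤ (1+K)*‖x - x₀‖ := by
        rw [show (1+K)*‖x - x₀‖ = Real.sqrt (((1+K)*‖x - x₀‖)^2) from
          (Real.sqrt_sq (by positivity)).symm]
        apply Real.sqrt_le_sqrt
        have hh2r : h^2 ≤ ‖x - x₀‖^2 := by nlinarith
        have hK2 : K^2 * h^2 ≤ K^2 * ‖x - x₀‖^2 :=
          mul_le_mul_of_nonneg_left hh2r (sq_nonneg K)
        nlinarith [mul_nonneg (by linarith : (0:ℝ) ≤ K) (sq_nonneg ‖x - x₀‖)]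
      have hinv : ((‖x - x₀‖ - h)^4)⁻¹ ≤ (3/2)^4 * ((‖x - x₀‖)^4)⁻¹ := by
        have h23 : (2/3)*‖x - x₀‖ ≤ ‖x - x₀‖ - h := by linarith
        have hp : ((2/3)*‖x - x₀‖)^4 ≤ (‖x - x₀‖ - h)^4 :=
          pow_le_pow_left₀ (by positivity) h23 4
        calc ((‖x - x₀‖ - h)^4)⁻¹ ≤ (((2/3)*‖x - x₀‖)^4)⁻¹ :=
              inv_anti₀ (by positivity) hp
          _ = (3/2)^4 * ((‖x - x₀‖)^4)⁻¹ := by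
              rw [mul_pow, mul_inv]
              norm_num
      have h1 : F x ≤ ((1+K)*‖x - x₀‖) * (A^2 * ((‖x - x₀‖ - h)^4)⁻¹) :=
        mul_le_mul hsqrt hsq (sq_nonneg _) (by positivity)
      have hmem : ‖x - x₀‖ ∈ Set.Ioc (3*h) R := ⟨hcase, hrR⟩
      have h3 : F x ≤ ((1+K)*(3/2)^4*A^2) *
          Set.indicator (Set.Ioc (3*h) R) (fun y => (y^3)⁻¹) ‖x - x₀‖ := by
        rw [Set.indicator_of_mem hmem]
        calc F x ≤ ((1+K)*‖x - x₀‖) * (A^2 * ((‖x - x₀‖ - h)^4)⁻¹) := h1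
          _ ≤ ((1+K)*‖x - x₀‖) * (A^2 * ((3/2)^4 * ((‖x - x₀‖)^4)⁻¹)) := by
              apply mul_le_mul_of_nonneg_left _ (by positivity)
              exact mul_le_mul_of_nonneg_left hinv (by positivity)
          _ = ((1+K)*(3/2)^4*A^2) * ((‖x - x₀‖)^3)⁻¹ := by
              field_simp
      exact h3.trans (le_add_of_nonneg_left (mul_nonneg hb1 (hind1nn x)))
  -- integrability of B
  have hBint1 : Integrable (fun x : EuclideanSpace ℝ (Fin 3) =>
      ((3+K)*A^2/h^3) * Set.indicator (Metric.closedBall x₀ (3*h)) (fun _ => (1:ℝ)) x) volume :=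
    (((integrableOn_const measure_closedBall_lt_top.ne).integrable_indicator
      measurableSet_closedBall)).const_mul _
  have hBint2 : Integrable (fun x : EuclideanSpace ℝ (Fin 3) =>
      ((1+K)*(3/2)^4*A^2) * Set.indicator (Set.Ioc (3*h) R) (fun y => (y^3)⁻¹) ‖x - x₀‖)
      volume := by
    have h1 := stmt6_radial_integrable (3*h) R (by positivity)
    have h2 := h1.comp_sub_right x₀
    exact h2.const_mul _
  have hBint : Integrable B volume := hBint1.add hBint2
  -- measurability of B
  have hBmeas : Measurable B := by
    apply Measurable.add
    · exact (measurable_const.indicator measurableSet_closedBall).const_mul _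
    · apply Measurable.const_mul
      have hnorm : Measurable fun x : EuclideanSpace ℝ (Fin 3) => ‖x - x₀‖ :=
        ((continuous_id.sub continuous_const).norm).measurable
      exact ((Measurable.indicator ((measurable_id.pow_const 3).inv)
        measurableSet_Ioc).comp hnorm)
  -- value of ∫ B
  have hIB : ∫ x, B x = ((3+K)*A^2/h^3) * ((3*h)^3 * v₁)
      + ((1+K)*(3/2)^4*A^2) * (3 * v₁ * (Real.log R - Real.log (3*h))) := by
    rw [hBdef, integral_add hBint1 hBint2, integral_const_mul, integral_const_mul]
    congr 1
    · congr 1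
      rw [MeasureTheory.integral_indicator measurableSet_closedBall,
        MeasureTheory.setIntegral_const, smul_eq_mul, mul_one]
      have hvol : volume (Metric.closedBall x₀ (3*h))
          = ENNReal.ofReal ((3*h)^3) * volume (Metric.ball (0 : EuclideanSpace ℝ (Fin 3)) 1) := by
        rw [Measure.addHaar_closedBall volume x₀ (by positivity : (0:ℝ) ≤ 3*h),
          finrank_euclideanSpace, Fintype.card_fin]
      rw [Measure.real, hvol, ENNReal.toReal_mul, ENNReal.toReal_ofReal (by positivity)]
    · congr 1
      rw [show (fun x : EuclideanSpace ℝ (Fin 3) =>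
          Set.indicator (Set.Ioc (3*h) R) (fun y => (y^3)⁻¹) ‖x - x₀‖)
        = fun x => (fun z : EuclideanSpace ℝ (Fin 3) =>
            Set.indicator (Set.Ioc (3*h) R) (fun y => (y^3)⁻¹) ‖z‖) (x - x₀) from rfl]
      rw [MeasureTheory.integral_sub_right_eq_self
        (fun z : EuclideanSpace ℝ (Fin 3) =>
          Set.indicator (Set.Ioc (3*h) R) (fun y => (y^3)⁻¹) ‖z‖) x₀]
      rw [stmt6_radial_int (3*h) R (by positivity) h3R.le]
  -- bound the value
  have hIBle : ∫ x, B x ≤ C₀ * (A^2 * |Real.log h|) := by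
    rw [hIB]
    have e1 : ((3+K)*A^2/h^3) * ((3*h)^3 * v₁) = 27*(3+K)*v₁*A^2 := by
      field_simp
      ring
    have e2 : Real.log R - Real.log (3*h) ≤ |Real.log R| + |Real.log h| := by
      have hl3 : Real.log (3*h) = Real.log 3 + Real.log h := Real.log_mul (by norm_num) h0.ne'
      have h3 : (0:ℝ) ≤ Real.log 3 := Real.log_nonneg (by norm_num)
      have habs1 : Real.log R ≤ |Real.log R| := le_abs_self _
      have habs2 : -Real.log h ≤ |Real.log h| := neg_le_abs _
      linarith
    have step1 : ((3+K)*A^2/h^3) * ((3*h)^3 * v₁)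
        + ((1+K)*(3/2)^4*A^2) * (3 * v₁ * (Real.log R - Real.log (3*h)))
        ≤ 27*(3+K)*v₁*A^2
          + ((1+K)*(3/2)^4*A^2) * (3 * v₁ * (|Real.log R| + |Real.log h|)) := by
      rw [e1]
      apply add_le_add_right
      apply mul_le_mul_of_nonneg_left _ hb2
      exact mul_le_mul_of_nonneg_left e2 (by positivity)
    refine step1.trans ?_
    have hstep : 1 + |Real.log h| ≤ (1/Real.log 2 + 1) * |Real.log h| := by
      have hq : 1 ≤ |Real.log h| / Real.log 2 := (one_le_div hlog2).2 hlogh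
      have : (1:ℝ) ≤ (1/Real.log 2) * |Real.log h| := by
        rw [one_div, inv_mul_eq_div]; exact hq
      nlinarith
    have hRabs : (0:ℝ) ≤ |Real.log R| := abs_nonneg _
    calc 27*(3+K)*v₁*A^2 + ((1+K)*(3/2)^4*A^2) * (3 * v₁ * (|Real.log R| + |Real.log h|))
        = A^2 * (27*(3+K)*v₁ + (1+K)*(3/2)^4*(3*v₁)*(|Real.log R| + |Real.log h|)) := by ring
      _ ≤ A^2 * ((27*(3+K)*v₁ + (1+K)*(3/2)^4*(3*v₁)*(|Real.log R| + 1)) * (1 + |Real.log h|)) := by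
          apply mul_le_mul_of_nonneg_left _ (sq_nonneg A)
          nlinarith [mul_nonneg (mul_nonneg h1K.le hv₁pos.le) habs,
            mul_nonneg (mul_nonneg (mul_nonneg h1K.le hv₁pos.le) hRabs) habs,
            mul_nonneg (mul_nonneg h3K.le hv₁pos.le) habs]
      _ ≤ A^2 * ((27*(3+K)*v₁ + (1+K)*(3/2)^4*(3*v₁)*(|Real.log R| + 1))
            * ((1/Real.log 2 + 1) * |Real.log h|)) := by
          apply mul_le_mul_of_nonneg_left _ (sq_nonneg A)
          exact mul_le_mul_of_nonneg_left hstep (by positivity)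
      _ = C₀ * (A^2 * |Real.log h|) := by rw [hC₀]; ring
  -- integral inequality
  have hle : ∫ x in Ω, F x ≤ C₀ * (A^2 * |Real.log h|) := by
    by_cases hm : AEStronglyMeasurable F (volume.restrict Ω)
    · have hFeq := hm.ae_eq_mk
      have hSmeas : MeasurableSet {x | B x < hm.mk F x} :=
        measurableSet_lt hBmeas hm.measurable_mk
      have hnull : (volume.restrict Ω) {x | B x < hm.mk F x} = 0 := by
        rw [Measure.restrict_apply hSmeas]
        have hsub : {x | B x < hm.mk F x} ∩ Ω ⊆ {x | ¬ F x = hm.mk F x} := by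
          rintro x ⟨hx1, hx2⟩
          exact ne_of_lt ((hFB x hx2).trans_lt hx1)
        have : volume ({x | B x < hm.mk F x} ∩ Ω)
            ≤ (volume.restrict Ω) {x | ¬ F x = hm.mk F x} := by
          calc volume ({x | B x < hm.mk F x} ∩ Ω)
              = volume (({x | B x < hm.mk F x} ∩ Ω) ∩ Ω) := by
                rw [Set.inter_assoc, Set.inter_self]
            _ ≤ (volume.restrict Ω) ({x | B x < hm.mk F x} ∩ Ω) :=
                Measure.le_restrict_apply _ _
            _ ≤ (volume.restrict Ω) {x | ¬ F x = hm.mk F x} := measure_mono hsub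
        have hz : (volume.restrict Ω) {x | ¬ F x = hm.mk F x} = 0 := ae_iff.1 hFeq
        exact le_antisymm (hz ▸ this) zero_le
      have hFleB : F ≤ᵐ[volume.restrict Ω] B := by
        have h1 : ∀ᵐ x ∂(volume.restrict Ω), ¬ (B x < hm.mk F x) := by
          rw [ae_iff]
          simpa [not_not] using hnull
        filter_upwards [hFeq, h1] with x hx1 hx2
        rw [hx1]
        exact not_lt.1 hx2
      calc ∫ x in Ω, F x ≤ ∫ x in Ω, B x :=
            integral_mono_of_nonneg (Filter.Eventually.of_forall hFnn) hBint.restrict hFleB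
        _ ≤ ∫ x, B x := setIntegral_le_integral hBint (Filter.Eventually.of_forall hBnn)
        _ ≤ C₀ * (A^2 * |Real.log h|) := hIBle
    · rw [integral_undef (fun hi => hm hi.aestronglyMeasurable)]
      positivity
  -- finish with square roots
  calc Real.sqrt (∫ x in Ω, F x) ≤ Real.sqrt (C₀ * (A^2 * |Real.log h|)) :=
        Real.sqrt_le_sqrt hle
    _ = Real.sqrt C₀ * (Real.sqrt (A^2) * Real.sqrt |Real.log h|) := by
        rw [Real.sqrt_mul hC₀pos.le, Real.sqrt_mul (sq_nonneg A)]
    _ = Real.sqrt C₀ * A * Real.sqrt |Real.log h| := by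
        rw [Real.sqrt_sq hA]; ring
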